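/- Let p be an odd prime dividing 2n+1 and let C be the n×n matrix over 𝔽_p with C_{jk} = (-1)^(k-j+1)(2j-1)(n-k+1) for j ≤ k and C_{jk} = C_{kj} for j > k. Then for every 1 ≤ j, k ≤ n one has C_{jk} = (-1)^(j+1)·(2j-1)·C_{1k} in 𝔽_p; that is, the j-th row of C equals (-1)^(j+1)(2j-1) times the first row. -/

import Mathlib

def Cent (n j k : ℕ) : ℤ :=
  if j ≤ k then (-1) ^ (k - j + 1) * (2 * (j : ℤ) - 1) * ((n : ℤ) - k + 1)
  else (-1) ^ (j - k + 1) * (2 * (k : ℤ) - 1) * ((n : ℤ) - j + 1)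

def Cmat (n : ℕ) : Matrix (Fin n) (Fin n) ℤ :=
  fun j k => Cent n (j.val + 1) (k.val + 1)

lemma neg_one_pow_congr' {R : Type*} [Monoid R] [HasDistribNeg R] {a b : ℕ}
    (h : a % 2 = b % 2) : (-1 : R) ^ a = (-1) ^ b := by
  rcases Nat.even_or_odd a with ha | ha
  · have hb : Even b := by rw [Nat.even_iff] at ha ⊢; omega
    rw [ha.neg_one_pow, hb.neg_one_pow]
  · have hb : Odd b := by rw [Nat.odd_iff] at ha ⊢; omega
    rw [ha.neg_one_pow, hb.neg_one_pow]

theorem stmt_17 (n : ℕ) (hn : 0 < n) (p : ℕ) (hp : p.Prime) (hp2 : p ≠ 2)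
    (hdvd : p ∣ 2 * n + 1) :
    ∀ j k : Fin n,
      ((Cmat n).map (fun x : ℤ => (x : ZMod p))) j k
        = (-1) ^ ((j.val + 1) + 1) * (2 * ((j.val : ZMod p) + 1) - 1)
            * ((Cmat n).map (fun x : ℤ => (x : ZMod p))) (⟨0, hn⟩ : Fin n) k := by
  intro j k
  have hN : 2 * (n : ZMod p) + 1 = 0 := by
    have := (ZMod.natCast_eq_zero_iff (2 * n + 1) p).mpr hdvd
    push_cast at this
    linear_combination this
  set J := j.val with hJ
  set K := k.val with hK
  simp only [Matrix.map_apply, Cmat, Cent]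
  by_cases hjk : J + 1 ≤ K + 1
  · rw [if_pos hjk, if_pos (by omega : 0 + 1 ≤ K + 1)]
    rw [show K + 1 - (J + 1) + 1 = K - J + 1 from by omega,
        show K + 1 - (0 + 1) + 1 = K + 1 from by omega]
    have h1 : ((-1 : ZMod p)) ^ (K - J + 1) = (-1) ^ ((J + 1 + 1) + (K + 1)) :=
      neg_one_pow_congr' (by omega)
    push_cast
    rw [h1, pow_add]
    ring
  · rw [if_neg hjk, if_pos (by omega : 0 + 1 ≤ K + 1)]
    rw [show J + 1 - (K + 1) + 1 = J - K + 1 from by omega,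
        show K + 1 - (0 + 1) + 1 = K + 1 from by omega]
    have h1 : ((-1 : ZMod p)) ^ (J - K + 1) = (-1) ^ ((J + 1 + 1) + (K + 1)) :=
      neg_one_pow_congr' (by omega)
    push_cast
    rw [h1, pow_add]
    linear_combination ((-1 : ZMod p)) ^ (J + 1 + 1) * (-1) ^ (K + 1) *
      ((K : ZMod p) - J) * hN
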